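/- With M, F, H as defined (F having rows (g_{1,n}), (g_{m+1,n} − g_{m,n}') for 1 ≤ m ≤ N−2, and last row Lₙ = −g_{N−1,n}' − Σ_{k=0}^{N−1} f_k g_{k,n} with g_{0,n} := 1; H = (0,…,0,−f)ᵀ), if Y : I → ℝᴺ is differentiable and satisfies M·Y' = F·Y + H, then y := Σₙ Yₙ satisfies y^{(m)} = Σₙ g_{m,n}Yₙ for 1 ≤ m ≤ N−1 and solves y^{(N)} + f_{N−1}y^{(N−1)} + ⋯ + f₀y + f = 0. -/

import Mathlib

/-- If `Y` is differentiable and satisfies the matrix system `M Y' = F Y + H` (with `M`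
having first row ones via `g 0 n ≡ 1`, the rows of `F` being `g_{m+1,n} - g'_{m,n}` for
`0 ≤ m ≤ N-2` and last row `Lₙ = -g'_{N-1,n} - ∑_k f_k g_{k,n}`, and `H = (0,…,0,-f)ᵀ`),
then `y = ∑ n, Y n` satisfies `y^{(m)} = ∑ n, g m n * Y n` and solves
`y^{(N)} + f_{N-1} y^{(N-1)} + ⋯ + f₀ y + f = 0`. Here `N = N₀ + 2 ≥ 2`. -/
theorem stmt_18 (N₀ : ℕ) (I : Set ℝ)
    (f : Fin (N₀ + 2) → ℝ → ℝ) (fh : ℝ → ℝ)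
    (hf : ∀ k, ContinuousOn (f k) I) (hfh : ContinuousOn fh I)
    (g g' : Fin (N₀ + 2) → Fin (N₀ + 2) → ℝ → ℝ)
    (hg0 : ∀ n, ∀ t : ℝ, g 0 n t = 1)
    (hg0' : ∀ n, ∀ t : ℝ, g' 0 n t = 0)
    (hgC1 : ∀ m n, (∀ t ∈ I, HasDerivAt (g m n) (g' m n t) t) ∧ ContinuousOn (g' m n) I)
    (hdet : ∀ t ∈ I, (Matrix.of fun m n => g m n t).det ≠ 0)
    (Y Y' : Fin (N₀ + 2) → ℝ → ℝ)
    (hY : ∀ n, ∀ t ∈ I, HasDerivAt (Y n) (Y' n t) t)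
    (F : Fin (N₀ + 2) → Fin (N₀ + 2) → ℝ → ℝ)
    (hF : ∀ m n t, F m n t =
      if h : (m : ℕ) + 1 < N₀ + 2 then g ⟨(m : ℕ) + 1, h⟩ n t - g' m n t
      else -(g' m n t) - ∑ k, f k t * g k n t)
    (hsys : ∀ t ∈ I, ∀ m : Fin (N₀ + 2),
      ∑ n, g m n t * Y' n t =
        ∑ n, F m n t * Y n t + (if (m : ℕ) = N₀ + 1 then -(fh t) else 0)) :
    ∀ t ∈ I,
      (∀ m : Fin (N₀ + 2), ∀ h : (m : ℕ) + 1 < N₀ + 2,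
        HasDerivAt (fun s => ∑ n, g m n s * Y n s)
          (∑ n, g ⟨(m : ℕ) + 1, h⟩ n t * Y n t) t) ∧
      HasDerivAt (fun s => ∑ n, g (Fin.last (N₀ + 1)) n s * Y n s)
        (-(∑ k, f k t * (∑ n, g k n t * Y n t)) - fh t) t := by
  intro t ht
  have key : ∀ m : Fin (N₀ + 2), HasDerivAt (fun s => ∑ n, g m n s * Y n s)
      (∑ n, (g' m n t * Y n t + g m n t * Y' n t)) t := by
    intro m
    exact HasDerivAt.fun_sum fun n _ => ((hgC1 m n).1 t ht).mul (hY n t ht)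
  constructor
  · intro m h
    have := key m
    convert this using 1
    have hs := hsys t ht m
    have hne : ¬ ((m : ℕ) = N₀ + 1) := by omega
    symm
    rw [Finset.sum_add_distrib, hs]
    simp only [hF, dif_pos h, hne, if_false, add_zero, sub_mul,
      Finset.sum_sub_distrib]
    ring
  · have := key (Fin.last (N₀ + 1))
    convert this using 1
    have hs := hsys t ht (Fin.last (N₀ + 1))
    symm
    rw [Finset.sum_add_distrib, hs]
    have hFe : ∀ n, F (Fin.last (N₀ + 1)) n t
        = -(g' (Fin.last (N₀ + 1)) n t) - ∑ k, f k t * g k n t := fun n => by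
      rw [hF]; exact dif_neg (by simp)
    simp only [hFe, Fin.val_last, if_pos rfl, sub_mul, neg_mul,
      Finset.sum_sub_distrib, Finset.sum_mul, Finset.mul_sum]
    rw [Finset.sum_comm, if_pos trivial]
    simp only [Finset.sum_neg_distrib]
    ring
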